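/- (Coefficient bound for the k-sender twirl, zero index.) Let d₀, …, d_{k−1} be reals with 2 ≤ d₀ ≤ d_i for all i, and let w: {0,1}^k → ℝ≥0 satisfy w_b / d_i ≤ w_{b⊕e_i} ≤ d_i · w_b for every b ∈ {0,1}^k and every i, where e_i flips the i-th bit. Suppose α: {0,1}^k → ℝ solves the linear system Σ_{a} K_{b,a} α_a = (∏_i d_i)² · w_b for all b, where K_{b,a} := (∏_i d_i) · ∏_i d_i^{¬(b_i⊕a_i)}. Then α_{0^k} ≤ ( ∏_{i=1}^{k−1} d_i² / ∏_{i=1}^{k−1}(d_i²−1) ) · w_{0^k} + Σ_{c ∈ {0,1}^k, c ≠ 0^k, c₀ = 0} ( ∏_{i≠0} d_i^{¬c_i + 1} / ∏_{i=1}^{k−1}(d_i²−1) ) · w_c. -/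

import Mathlib

open scoped Kronecker ComplexOrder
open MeasureTheory Matrix

noncomputable section

namespace QIT

section UnitaryTopology

variable (n : Type*) [Fintype n] [DecidableEq n]

instance : MeasurableSpace (Matrix.unitaryGroup n ℂ) := borel _
instance : BorelSpace (Matrix.unitaryGroup n ℂ) := ⟨rfl⟩

instance : IsTopologicalGroup (Matrix.unitaryGroup n ℂ) where
  continuous_mul := by
    apply Continuous.subtype_mk
    exact Continuous.matrix_mul (continuous_subtype_val.comp continuous_fst)
      (continuous_subtype_val.comp continuous_snd)
  continuous_inv := by
    have h : Continuous fun U : Matrix.unitaryGroup n ℂ => star U :=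
      Continuous.subtype_mk (continuous_star.comp continuous_subtype_val) _
    simpa [← Unitary.star_eq_inv] using h

instance : CompactSpace (Matrix.unitaryGroup n ℂ) := by
  apply isCompact_iff_compactSpace.mp
  have hclosed : IsClosed ((Matrix.unitaryGroup n ℂ : Set (Matrix n n ℂ))) := by
    have h1 : IsClosed {M : Matrix n n ℂ | star M * M = 1} :=
      isClosed_eq (Continuous.matrix_mul continuous_star continuous_id) continuous_const
    have h2 : IsClosed {M : Matrix n n ℂ | M * star M = 1} :=
      isClosed_eq (Continuous.matrix_mul continuous_id continuous_star) continuous_const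
    have heq : (Matrix.unitaryGroup n ℂ : Set (Matrix n n ℂ))
        = {M | star M * M = 1} ∩ {M | M * star M = 1} := by
      ext M; exact Unitary.mem_iff
    rw [heq]; exact h1.inter h2
  have hsub : (Matrix.unitaryGroup n ℂ : Set (Matrix n n ℂ)) ⊆
      ((Set.univ.pi fun _ : n => Set.univ.pi fun _ : n => Metric.closedBall (0 : ℂ) 1 :
        Set (n → n → ℂ)) : Set (Matrix n n ℂ)) := by
    intro U hU
    intro i _
    intro j _
    rw [Metric.mem_closedBall, dist_zero_right]
    exact entry_norm_bound_of_unitary hU i j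
  exact IsCompact.of_isClosed_subset
    (isCompact_univ_pi fun _ => isCompact_univ_pi fun _ => isCompact_closedBall _ _)
    hclosed hsub

/-- The Haar probability measure on the unitary group. -/
def haarU : Measure (Matrix.unitaryGroup n ℂ) :=
  Measure.haarMeasure ⟨⟨Set.univ, isCompact_univ⟩, by simp⟩

end UnitaryTopology


section Defs

/-- Entrywise (Bochner) integral of a matrix-valued function. -/
def mInt {G : Type*} [MeasurableSpace G] (mu : Measure G) {m : Type*}
    (f : G → Matrix m m ℂ) : Matrix m m ℂ :=
  fun i j => ∫ U, f U i j ∂mu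

/-- Partial trace over the first tensor factor. -/
def ptL {A B : Type*} [Fintype A] (M : Matrix (A × B) (A × B) ℂ) : Matrix B B ℂ :=
  fun i j => ∑ a, M (a, i) (a, j)

/-- Partial trace over the second tensor factor. -/
def ptR {A B : Type*} [Fintype B] (M : Matrix (A × B) (A × B) ℂ) : Matrix A A ℂ :=
  fun i j => ∑ b, M (i, b) (j, b)

/-- Extension `T ⊗ id` of a superoperator to an additional tensor factor. -/
def matExt {A E R : Type*} (T : Matrix A A ℂ → Matrix E E ℂ)
    (M : Matrix (A × R) (A × R) ℂ) : Matrix (E × R) (E × R) ℂ :=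
  fun p q => T (fun a b => M (a, p.2) (b, q.2)) p.1 q.1

/-- Linearity of a superoperator. -/
def IsLinMap {A E : Type*} (T : Matrix A A ℂ → Matrix E E ℂ) : Prop :=
  ∀ (c : ℂ) (M N : Matrix A A ℂ), T (c • M + N) = c • T M + T N

/-- Complete positivity of a superoperator: it is linear and all its extensions by
finite-dimensional identities preserve positive semidefiniteness. -/
def IsCPMap {A E : Type*} [Fintype A] [Fintype E] (T : Matrix A A ℂ → Matrix E E ℂ) : Prop :=
  IsLinMap T ∧ ∀ (n : ℕ) (M : Matrix (A × Fin n) (A × Fin n) ℂ),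
    M.PosSemidef → (matExt T M).PosSemidef

/-- Trace preservation. -/
def IsTPMap {A E : Type*} [Fintype A] [Fintype E] (T : Matrix A A ℂ → Matrix E E ℂ) : Prop :=
  ∀ M : Matrix A A ℂ, (T M).trace = M.trace

/-- Spectral (Moore–Penrose) real power of a Hermitian matrix: the eigenvalue `λ` is mapped to
`λ ^ r` if `λ ≠ 0`, and to `0` otherwise.  Junk value `0` on non-Hermitian input. -/
def mpow {n : Type*} [Fintype n] [DecidableEq n] (M : Matrix n n ℂ) (r : ℝ) : Matrix n n ℂ :=
  if h : M.IsHermitian then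
    (h.eigenvectorUnitary : Matrix n n ℂ) *
      Matrix.diagonal (fun i =>
        Complex.ofReal (if h.eigenvalues i = 0 then (0 : ℝ) else h.eigenvalues i ^ r)) *
      star (h.eigenvectorUnitary : Matrix n n ℂ)
  else 0

/-- `ρ_δ`: the matrix obtained from a Hermitian matrix by zeroing out a maximal set of
smallest eigenvalues whose sum is at most `δ` (ties between equal eigenvalues broken by a
fixed enumeration of the index type).  Junk value `0` on non-Hermitian input. -/
def dTrunc {n : Type*} [Fintype n] [DecidableEq n] (M : Matrix n n ℂ) (δ : ℝ) :
    Matrix n n ℂ :=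
  if h : M.IsHermitian then
    (h.eigenvectorUnitary : Matrix n n ℂ) *
      Matrix.diagonal (fun i =>
        if (∑ j ∈ Finset.univ.filter (fun j =>
              h.eigenvalues j < h.eigenvalues i ∨
                (h.eigenvalues j = h.eigenvalues i ∧
                  Fintype.equivFin n j ≤ Fintype.equivFin n i)), h.eigenvalues j) ≤ δ
        then (0 : ℂ) else (h.eigenvalues i : ℂ)) *
      star (h.eigenvectorUnitary : Matrix n n ℂ)
  else 0

/-- Squared Schatten 2-norm `‖M‖₂² = Tr[MᴴM]`. -/
def sn2sq {n : Type*} [Fintype n] (M : Matrix n n ℂ) : ℝ := (Matrix.trace (Mᴴ * M)).re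

/-- Trace norm `‖M‖₁ = Tr √(MᴴM)`. -/
def traceNorm {n : Type*} [Fintype n] [DecidableEq n] (M : Matrix n n ℂ) : ℝ :=
  (Matrix.trace (mpow (Mᴴ * M) (1 / 2))).re

/-- The conditioned state `(I ⊗ (ρ^B_δ)^{-1/4}) ρ^{AB} (I ⊗ (ρ^B_δ)^{-1/4})`. -/
def tildeCond {A B : Type*} [Fintype A] [DecidableEq A] [Fintype B] [DecidableEq B]
    (ρ : Matrix (A × B) (A × B) ℂ) (δ : ℝ) : Matrix (A × B) (A × B) ℂ :=
  ((1 : Matrix A A ℂ) ⊗ₖ mpow (dTrunc (ptL ρ) δ) (-(1 / 4))) * ρ *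
    ((1 : Matrix A A ℂ) ⊗ₖ mpow (dTrunc (ptL ρ) δ) (-(1 / 4)))

/-- The δ-tilde conditional 2-entropy `H̃_{2,δ}(A|B)_ρ` of a state on `A ⊗ B`
(conditioning on the second factor). -/
def tildeH2 {A B : Type*} [Fintype A] [DecidableEq A] [Fintype B] [DecidableEq B]
    (ρ : Matrix (A × B) (A × B) ℂ) (δ : ℝ) : ℝ :=
  - Real.logb 2 ((Matrix.trace (tildeCond ρ δ * tildeCond ρ δ)).re)

/-- The unconditional tilde 2-entropy `H̃_2(A)_σ = -log Tr[σ²]`. -/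
def h2un {A : Type*} [Fintype A] (σ : Matrix A A ℂ) : ℝ :=
  - Real.logb 2 ((Matrix.trace (σ * σ)).re)

/-- The max entropy `H_max(A)_σ = 2 log Tr[√σ]`. -/
def hMax {A : Type*} [Fintype A] [DecidableEq A] (σ : Matrix A A ℂ) : ℝ :=
  2 * Real.logb 2 ((Matrix.trace (mpow σ (1 / 2))).re)

/-- The maximally entangled state `Φ^{AA'}`. -/
def maxEnt (A : Type*) [Fintype A] [DecidableEq A] : Matrix (A × A) (A × A) ℂ :=
  fun p q => if p.1 = p.2 ∧ q.1 = q.2 then (Fintype.card A : ℂ)⁻¹ else 0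

/-- The swap operator `F^{AA'}`. -/
def swapOp (A : Type*) [DecidableEq A] : Matrix (A × A) (A × A) ℂ :=
  fun p q => if p.1 = q.2 ∧ p.2 = q.1 then 1 else 0

/-- The Choi state of a superoperator, on `A ⊗ E`. -/
def choi {A E : Type*} [Fintype A] [DecidableEq A]
    (T : Matrix A A ℂ → Matrix E E ℂ) : Matrix (A × E) (A × E) ℂ :=
  fun p q => (Fintype.card A : ℂ)⁻¹ * T (Matrix.single p.1 q.1 1) p.2 q.2

/-- A (mixed) quantum state. -/
def IsState {A : Type*} [Fintype A] (ρ : Matrix A A ℂ) : Prop :=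
  ρ.PosSemidef ∧ ρ.trace = 1

/-- A pure quantum state (rank-one projection). -/
def IsPureState {A : Type*} [Fintype A] (ψ : Matrix A A ℂ) : Prop :=
  ψ.PosSemidef ∧ ψ * ψ = ψ ∧ ψ.trace = 1


/-- The Haar measure on the unitary group is a probability measure. -/
instance {n : Type*} [Fintype n] [DecidableEq n] : IsProbabilityMeasure (haarU n) :=
  ⟨Measure.haarMeasure_self⟩

/-- marginal over the middle factor: `((X × Y) × Z) ↦ (X × Z)`. -/
def m13 {X Y Z : Type*} [Fintype Y] (M : Matrix ((X × Y) × Z) ((X × Y) × Z) ℂ) :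
    Matrix (X × Z) (X × Z) ℂ :=
  fun p q => ∑ y, M ((p.1, y), p.2) ((q.1, y), q.2)

/-- marginal over the first of three factors: `((X × Y) × Z) ↦ (Y × Z)`. -/
def m23 {X Y Z : Type*} [Fintype X] (M : Matrix ((X × Y) × Z) ((X × Y) × Z) ℂ) :
    Matrix (Y × Z) (Y × Z) ℂ :=
  fun p q => ∑ x, M ((x, p.1), p.2) ((x, q.1), q.2)

/-- marginal over the first component of the second factor:
`(X × (Y × Z)) ↦ (X × Z)`. -/
def m2of2 {X Y Z : Type*} [Fintype Y] (M : Matrix (X × (Y × Z)) (X × (Y × Z)) ℂ) :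
    Matrix (X × Z) (X × Z) ℂ :=
  fun p q => ∑ y, M (p.1, (y, p.2)) (q.1, (y, q.2))

/-- `(F^{AA'})^b`: the swap operator if `b = true`, the identity otherwise. -/
def swapPow (A : Type*) [Fintype A] [DecidableEq A] (b : Bool) : Matrix (A × A) (A × A) ℂ :=
  if b then swapOp A else 1

/-- `I_S ⊗ V` for a rectangular matrix `V`. -/
def idTensor {S α β : Type*} [DecidableEq S] (V : Matrix α β ℂ) :
    Matrix (S × α) (S × β) ℂ := fun p q => if p.1 = q.1 then V p.2 q.2 else 0

/-- `Ω^{A'A''} ⊗ Δ^{B'B''}` rearranged as an operator on `(A''⊗B'') ⊗ (A'⊗B')`. -/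
def pairState {A A' B B' : Type*} (Ω : Matrix (A' × A) (A' × A) ℂ)
    (Δ : Matrix (B' × B) (B' × B) ℂ) :
    Matrix ((A × B) × (A' × B')) ((A × B) × (A' × B')) ℂ :=
  fun p q => Ω (p.2.1, p.1.1) (q.2.1, q.1.1) * Δ (p.2.2, p.1.2) (q.2.2, q.1.2)

/-- interleave two bipartite operators on `A⊗X` and `B⊗Y` as an operator on
`(A⊗B) ⊗ (X⊗Y)`. -/
def arrange2 {A B X Y : Type*} (M : Matrix (A × X) (A × X) ℂ) (N : Matrix (B × Y) (B × Y) ℂ) :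
    Matrix ((A × B) × (X × Y)) ((A × B) × (X × Y)) ℂ :=
  fun p q => M (p.1.1, p.2.1) (q.1.1, q.2.1) * N (p.1.2, p.2.2) (q.1.2, q.2.2)

/-- conjugate the first factor of a bipartite operator by a rectangular matrix `U : A → A'`. -/
def encApply {A A' X : Type*} [Fintype A] (U : Matrix A' A ℂ) (M : Matrix (A × X) (A × X) ℂ) :
    Matrix (A' × X) (A' × X) ℂ :=
  fun p q => ∑ a, ∑ a', U p.1 a * M (a, p.2) (a', q.2) * star (U q.1 a')

section Pi

variable {k : ℕ} {a : Fin k → Type*} [∀ i, Fintype (a i)] [∀ i, DecidableEq (a i)]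

/-- Tensor product of `k` matrices. -/
def piKron (U : ∀ i, Matrix (a i) (a i) ℂ) : Matrix (∀ i, a i) (∀ i, a i) ℂ :=
  fun f g => ∏ i, U i (f i) (g i)

/-- merge assignments on the `true` and `false` fibers of a bit string into a full assignment. -/
def bmerge (b : Fin k → Bool) (f : (i : {i // b i = true}) → a i.1)
    (g : (i : {i // b i = false}) → a i.1) (i : Fin k) : a i :=
  if h : b i = true then f ⟨i, h⟩ else g ⟨i, by simpa using h⟩

/-- marginal of an operator on `(⊗ᵢ Aᵢ) ⊗ E` on the subsystem
`(⊗_{i : bᵢ = 1} Aᵢ) ⊗ E` selected by a bit string `b`. -/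
def margB {E : Type*} (b : Fin k → Bool)
    (M : Matrix ((∀ i, a i) × E) ((∀ i, a i) × E) ℂ) :
    Matrix (((i : {i // b i = true}) → a i.1) × E) (((i : {i // b i = true}) → a i.1) × E) ℂ :=
  fun p q => ∑ g : (i : {i // b i = false}) → a i.1,
    M (bmerge b p.1 g, p.2) (bmerge b q.1 g, q.2)

/-- `⊗ᵢ (F^{AᵢAᵢ'})^{bᵢ}` as an operator on `(⊗ᵢAᵢ) ⊗ (⊗ᵢAᵢ')`. -/
def swapProd (b : Fin k → Bool) :
    Matrix ((∀ i, a i) × (∀ i, a i)) ((∀ i, a i) × (∀ i, a i)) ℂ :=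
  fun p q => ∏ i, if b i
    then (if p.1 i = q.2 i ∧ p.2 i = q.1 i then (1 : ℂ) else 0)
    else (if p.1 i = q.1 i ∧ p.2 i = q.2 i then (1 : ℂ) else 0)

end Pi

/-- Tensor product `S ⊗ T` of two superoperators. -/
def tensorSup {α β α' β' : Type*} [Fintype α] [DecidableEq α] [Fintype α'] [DecidableEq α']
    (S : Matrix α α ℂ → Matrix β β ℂ) (T : Matrix α' α' ℂ → Matrix β' β' ℂ)
    (M : Matrix (α × α') (α × α') ℂ) : Matrix (β × β') (β × β') ℂ :=
  fun p q => ∑ x : α, ∑ y : α, ∑ x' : α', ∑ y' : α',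
    M (x, x') (y, y') * S (Matrix.single x y 1) p.1 q.1 *
      T (Matrix.single x' y' 1) p.2 q.2

/-- Hilbert–Schmidt adjoint of a superoperator. -/
def hsAdj {A E : Type*} [Fintype A] [DecidableEq A] [Fintype E]
    (T : Matrix A A ℂ → Matrix E E ℂ) (Y : Matrix E E ℂ) : Matrix A A ℂ :=
  fun x y => star (Matrix.trace (Yᴴ * T (Matrix.single x y 1)))

end Defs

end QIT
/-- Coefficient bound for the k-sender twirl, zero index: under the same
assumptions as for the nonzero case, with `2 ≤ d₀ ≤ dᵢ` for all `i`,
`α_{0^k} ≤ (∏_{i≠0} dᵢ²/∏_{i≠0}(dᵢ²−1))·w_{0^k}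
  + Σ_{c≠0^k, c₀=0} (∏_{i≠0} dᵢ^{¬cᵢ+1}/∏_{i≠0}(dᵢ²−1))·w_c`. -/
theorem ksender_twirl_coeff_bound_zero {k : ℕ} (hk : 0 < k) (d : Fin k → ℝ)
    (hd0 : 2 ≤ d ⟨0, hk⟩) (hd : ∀ i, d ⟨0, hk⟩ ≤ d i)
    (w : (Fin k → Bool) → ℝ) (hw0 : ∀ b, 0 ≤ w b)
    (hw : ∀ (b : Fin k → Bool) (i : Fin k),
      w b / d i ≤ w (Function.update b i (!b i)) ∧
        w (Function.update b i (!b i)) ≤ d i * w b)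
    (α : (Fin k → Bool) → ℝ)
    (hα : ∀ b : Fin k → Bool,
      ∑ a : Fin k → Bool, ((∏ i, d i) * ∏ i, if b i = a i then d i else 1) * α a
        = (∏ i, d i) ^ 2 * w b) :
    α (fun _ => false) ≤
      ((∏ i ∈ Finset.univ.erase ⟨0, hk⟩, d i ^ 2) /
          ∏ i ∈ Finset.univ.erase ⟨0, hk⟩, (d i ^ 2 - 1)) * w (fun _ => false)
      + ∑ c ∈ (Finset.univ.filter fun c : Fin k → Bool =>
          c ≠ (fun _ => false) ∧ c ⟨0, hk⟩ = false),
          ((∏ i ∈ Finset.univ.erase ⟨0, hk⟩, if c i then d i else d i ^ 2) /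
            ∏ i ∈ Finset.univ.erase ⟨0, hk⟩, (d i ^ 2 - 1)) * w c := by
  classical
  set i0 : Fin k := ⟨0, hk⟩ with hi0
  have hd2 : ∀ i, 2 ≤ d i := fun i => le_trans hd0 (hd i)
  have hdpos : ∀ i, 0 < d i := fun i => lt_of_lt_of_le two_pos (hd2 i)
  have hdne : ∀ i, d i ≠ 0 := fun i => (hdpos i).ne'
  have hsq : ∀ i, 0 < d i ^ 2 - 1 := by
    intro i
    nlinarith [hd2 i]
  have hsqne : ∀ i, d i ^ 2 - 1 ≠ 0 := fun i => (hsq i).ne'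
  -- inverse coefficients
  set g : Fin k → Bool → ℝ :=
    fun i x => if x then -1 / (d i * (d i ^ 2 - 1)) else 1 / (d i ^ 2 - 1) with hg
  -- inversion identity
  have hinv : ∀ a : Fin k → Bool,
      ∑ b : Fin k → Bool, (∏ i, g i (b i)) *
        ((∏ i, d i) * ∏ i, if b i = a i then d i else 1)
        = if a = (fun _ => false) then 1 else 0 := by
    intro a
    have hfact : (∏ i, ∑ x : Bool, (g i x * (d i * if x = a i then d i else 1)))
        = ∑ b : Fin k → Bool, ∏ i, (g i (b i) * (d i * if b i = a i then d i else 1)) :=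
      Finset.prod_univ_sum _ _
    calc ∑ b : Fin k → Bool, (∏ i, g i (b i)) *
          ((∏ i, d i) * ∏ i, if b i = a i then d i else 1)
        = ∑ b : Fin k → Bool, ∏ i, (g i (b i) * (d i * if b i = a i then d i else 1)) := by
          refine Finset.sum_congr rfl fun b _ => ?_
          rw [Finset.prod_mul_distrib, Finset.prod_mul_distrib]
      _ = ∏ i, ∑ x : Bool, (g i x * (d i * if x = a i then d i else 1)) := hfact.symm
      _ = ∏ i, (if a i then (0:ℝ) else 1) := by
          refine Finset.prod_congr rfl fun i _ => ?_
          rw [Fintype.sum_bool]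
          have h1 := hdne i
          have h2 := hsqne i
          cases ha : a i <;> simp only [hg] <;> simp [ha] <;> field_simp <;> ring
      _ = if a = (fun _ => false) then 1 else 0 := by
          by_cases h : a = (fun _ => false)
          · subst h; simp
          · rw [if_neg h]
            obtain ⟨i, hi⟩ : ∃ i, a i = true := by
              by_contra hcon
              push_neg at hcon
              exact h (funext fun i => by simpa using hcon i)
            exact Finset.prod_eq_zero (Finset.mem_univ i) (by rw [hi]; simp)
  -- explicit formula for α at 0
  have hα0 : α (fun _ => false)
      = ∑ c : Fin k → Bool, ((∏ i, g i (c i)) * (∏ i, d i) ^ 2) * w c := by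
    have h1 : α (fun _ => false)
        = ∑ a : Fin k → Bool, (if a = (fun _ => false) then (1:ℝ) else 0) * α a := by
      simp [ite_mul, Finset.sum_ite_eq, Finset.sum_ite_eq']
    rw [h1]
    have h2 : ∀ a : Fin k → Bool, (if a = (fun _ => false) then (1:ℝ) else 0) * α a
        = ∑ b : Fin k → Bool, (∏ i, g i (b i)) *
            (((∏ i, d i) * ∏ i, if b i = a i then d i else 1) * α a) := by
      intro a
      rw [← hinv a, Finset.sum_mul]
      exact Finset.sum_congr rfl fun b _ => by ring
    calc (∑ a : Fin k → Bool, (if a = (fun _ => false) then (1:ℝ) else 0) * α a)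
        = ∑ a : Fin k → Bool, ∑ b : Fin k → Bool, (∏ i, g i (b i)) *
            (((∏ i, d i) * ∏ i, if b i = a i then d i else 1) * α a) :=
          Finset.sum_congr rfl fun a _ => h2 a
      _ = ∑ b : Fin k → Bool, (∏ i, g i (b i)) *
            (∑ a : Fin k → Bool, ((∏ i, d i) * ∏ i, if b i = a i then d i else 1) * α a) := by
          rw [Finset.sum_comm]
          exact Finset.sum_congr rfl fun b _ => by rw [Finset.mul_sum]
      _ = ∑ b : Fin k → Bool, (∏ i, g i (b i)) * ((∏ i, d i) ^ 2 * w b) :=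
          Finset.sum_congr rfl fun b _ => by rw [hα b]
      _ = ∑ c : Fin k → Bool, ((∏ i, g i (c i)) * (∏ i, d i) ^ 2) * w c :=
          Finset.sum_congr rfl fun b _ => by ring
  -- rewrite coefficients
  set u : Fin k → Bool → ℝ := fun i x => if x then -(d i) else d i ^ 2 with hu
  set D : ℝ := ∏ i, (d i ^ 2 - 1) with hD
  have hcoef : ∀ c : Fin k → Bool,
      (∏ i, g i (c i)) * (∏ i, d i) ^ 2 = (∏ i, u i (c i)) / D := by
    intro c
    rw [hD, ← Finset.prod_div_distrib, sq, ← Finset.prod_mul_distrib,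
      ← Finset.prod_mul_distrib]
    refine Finset.prod_congr rfl fun i _ => ?_
    have h1 := hdne i
    have h2 := hsqne i
    cases hc : c i <;> simp only [hg, hu] <;> simp [hc] <;> field_simp <;> ring
  rw [hα0]
  have hα0' : (∑ c : Fin k → Bool, ((∏ i, g i (c i)) * (∏ i, d i) ^ 2) * w c)
      = ∑ c : Fin k → Bool, ((∏ i, u i (c i)) / D) * w c :=
    Finset.sum_congr rfl fun c _ => by rw [hcoef c]
  rw [hα0']
  -- notation
  set E : Finset (Fin k) := Finset.univ.erase i0 with hE
  set D' : ℝ := ∏ i ∈ E, (d i ^ 2 - 1) with hD'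
  have hD'pos : 0 < D' := Finset.prod_pos fun i _ => hsq i
  have hDsplit : D = (d i0 ^ 2 - 1) * D' := by
    rw [hD, hD', hE, ← Finset.mul_prod_erase Finset.univ _ (Finset.mem_univ i0)]
  set Q : (Fin k → Bool) → ℝ := fun c => ∏ i ∈ E, (if c i then d i else d i ^ 2) with hQ
  have hQnn : ∀ c, 0 ≤ Q c := by
    intro c
    refine Finset.prod_nonneg fun i _ => ?_
    split
    · exact (hdpos i).le
    · positivity
  set S : Finset (Fin k → Bool) := Finset.univ.filter (fun c => c i0 = false) with hS
  have hupd : ∀ (c : Fin k → Bool) (x y : Bool), c i0 = y →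
      Function.update (Function.update c i0 x) i0 y = c := by
    intro c x y hcy
    funext j
    rcases eq_or_ne j i0 with rfl | hne
    · simp [hcy]
    · simp [Function.update_apply, hne]
  -- main estimate
  have key : (∑ c : Fin k → Bool, ((∏ i, u i (c i)) / D) * w c)
      ≤ ∑ c ∈ S, (Q c / D') * w c := by
    set f : (Fin k → Bool) → ℝ := fun c => ((∏ i, u i (c i)) / D) * w c with hf
    have hsplit : (∑ c : Fin k → Bool, f c)
        = ∑ c ∈ S, (f c + f (Function.update c i0 true)) := by
      rw [Finset.sum_add_distrib]
      rw [← Finset.sum_filter_add_sum_filter_not Finset.univ (fun c => c i0 = false) f]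
      congr 1
      refine Finset.sum_nbij' (fun c => Function.update c i0 false)
        (fun c => Function.update c i0 true) ?_ ?_ ?_ ?_ ?_
      · intro c hc; simp [hS]
      · intro c hc
        simp only [Finset.mem_filter, Finset.mem_univ, true_and] at *
        simp
      · intro c hc
        simp only [Finset.mem_filter, Finset.mem_univ, true_and] at hc
        have hc' : c i0 = true := by simpa using hc
        exact hupd c false true hc'
      · intro c hc
        simp only [hS, Finset.mem_filter, Finset.mem_univ, true_and] at hc
        exact hupd c true false hc
      · intro c hc
        simp only [Finset.mem_filter, Finset.mem_univ, true_and] at hc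
        have hc' : c i0 = true := by simpa using hc
        exact (congrArg f (hupd c false true hc')).symm
    rw [hsplit]
    refine Finset.sum_le_sum fun c hc => ?_
    simp only [hS, Finset.mem_filter, Finset.mem_univ, true_and] at hc
    set c' : Fin k → Bool := Function.update c i0 true with hc'
    have hPsplit : (∏ i, u i (c i)) = d i0 ^ 2 * ∏ i ∈ E, u i (c i) := by
      rw [hE, ← Finset.mul_prod_erase Finset.univ _ (Finset.mem_univ i0)]
      congr 1
      simp [hu, hc]
    have hPsplit' : (∏ i, u i (c' i)) = -(d i0) * ∏ i ∈ E, u i (c i) := by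
      rw [hE, ← Finset.mul_prod_erase Finset.univ _ (Finset.mem_univ i0)]
      have h1 : u i0 (c' i0) = -(d i0) := by simp [hu, hc']
      rw [h1]
      congr 1
      refine Finset.prod_congr rfl fun i hi => ?_
      rw [hc', Function.update_of_ne (Finset.ne_of_mem_erase (hE ▸ hi))]
    set P : ℝ := ∏ i ∈ E, u i (c i) with hP
    have hPQ : P ≤ Q c := by
      have habs : |P| = Q c := by
        rw [hP, hQ, Finset.abs_prod]
        refine Finset.prod_congr rfl fun i _ => ?_
        cases hci : c i <;>
          simp [hu, hci, abs_of_pos (hdpos i), abs_of_pos (pow_pos (hdpos i) 2)]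
      calc P ≤ |P| := le_abs_self P
        _ = Q c := habs
    have hwc := hw c i0
    rw [hc] at hwc
    simp only [Bool.not_false] at hwc
    have hw1 : w c / d i0 ≤ w c' := hwc.1
    have hw2 : w c' ≤ d i0 * w c := hwc.2
    set X : ℝ := d i0 ^ 2 * w c - d i0 * w c' with hX
    have hXnn : 0 ≤ X := by
      have h3 : d i0 * w c' ≤ d i0 * (d i0 * w c) :=
        mul_le_mul_of_nonneg_left hw2 (hdpos i0).le
      rw [hX]; nlinarith
    have hXle : X ≤ (d i0 ^ 2 - 1) * w c := by
      have h4 : w c ≤ d i0 * w c' := by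
        have h5 := mul_le_mul_of_nonneg_left hw1 (hdpos i0).le
        rw [mul_div_cancel₀ _ (hdne i0)] at h5
        linarith
      rw [hX]; nlinarith
    have hnum : f c + f c' = (P * X) / ((d i0 ^ 2 - 1) * D') := by
      rw [hf]
      simp only
      rw [hPsplit, hPsplit', hDsplit, hX]
      have h1 := hsqne i0
      have h2 := hD'pos.ne'
      field_simp
      ring
    rw [hnum]
    have hden : 0 < (d i0 ^ 2 - 1) * D' := mul_pos (hsq i0) hD'pos
    have hkey : P * X ≤ (d i0 ^ 2 - 1) * (Q c * w c) := by
      calc P * X ≤ Q c * X := mul_le_mul_of_nonneg_right hPQ hXnn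
        _ ≤ Q c * ((d i0 ^ 2 - 1) * w c) := mul_le_mul_of_nonneg_left hXle (hQnn c)
        _ = (d i0 ^ 2 - 1) * (Q c * w c) := by ring
    calc (P * X) / ((d i0 ^ 2 - 1) * D')
        ≤ ((d i0 ^ 2 - 1) * (Q c * w c)) / ((d i0 ^ 2 - 1) * D') := by gcongr
      _ = (Q c / D') * w c := by
          rw [mul_div_mul_left _ _ (hsqne i0)]
          ring
  -- identify the RHS with the S-sum
  have hrhs : ((∏ i ∈ E, d i ^ 2) / D') * w (fun _ => false)
      + (∑ c ∈ (Finset.univ.filter fun c : Fin k → Bool =>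
          c ≠ (fun _ => false) ∧ c i0 = false),
          ((∏ i ∈ E, if c i then d i else d i ^ 2) / D') * w c)
      = ∑ c ∈ S, (Q c / D') * w c := by
    have hSins : S = insert (fun _ => false)
        (Finset.univ.filter fun c : Fin k → Bool =>
          c ≠ (fun _ => false) ∧ c i0 = false) := by
      ext c
      simp only [hS, Finset.mem_insert, Finset.mem_filter, Finset.mem_univ, true_and]
      by_cases h : c = (fun _ => false)
      · subst h; simp
      · simp [h]
    have hQ0 : Q (fun _ => false) = ∏ i ∈ E, d i ^ 2 := by
      rw [hQ]; simp
    rw [hSins, Finset.sum_insert (by simp), hQ0]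
  exact key.trans hrhs.ge
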